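/- Let β > −1/2, γ > −1, n ∈ ℕ and 1 ≤ p < ∞. Let f be a measurable function on Λ_{a,b,c} with ∫_{Λ_{a,b,c}} |f|^p W^{(0,β,γ)}_{a,b,c} du dv < ∞. Then inf_{g} (∫_{Λ_{a,b,c}} |f−g|^p W^{(0,β,γ)}_{a,b,c} du dv)^{1/p} = (b−a)^{1/p} · inf_{G} (∫_{B²₊} |f∘ψ⁻¹ − G|^p W_B^{(0,β,γ)} ds dt)^{1/p}, where both infima are taken over polynomials in two variables of degree at most n that are even in the second variable. -/

import Mathlib

open MeasureTheory

noncomputable section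

/-- The upper half `Λ_{a,b,c}` of the fully symmetric domain `Ω_{a,b,c}`. -/
def LamSet (a b c : ℝ) : Set (ℝ × ℝ) :=
  {p | a + (c - a) * p.1 ^ 2 ≤ p.2 ^ 2 ∧ p.2 ^ 2 ≤ b + (c - b) * p.1 ^ 2 ∧
       |p.1| ≤ 1 ∧ 0 ≤ p.2}

/-- The closed upper half-disk `B²₊`. -/
def Bplus : Set (ℝ × ℝ) := {p | p.1 ^ 2 + p.2 ^ 2 ≤ 1 ∧ 0 ≤ p.2}

/-- The inverse map `ψ⁻¹(s,t) = (s, sqrt((b−a)t² + a(1−s²) + cs²))`. -/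
def psiInvMap (a b c : ℝ) (p : ℝ × ℝ) : ℝ × ℝ :=
  (p.1, Real.sqrt ((b - a) * p.2 ^ 2 + a * (1 - p.1 ^ 2) + c * p.1 ^ 2))

/-- The weight `W^{(0,β,γ)}_{a,b,c}`. -/
def W0abc (a b c β γ : ℝ) (p : ℝ × ℝ) : ℝ :=
  |p.2| * ((-a + (a - c) * p.1 ^ 2 + p.2 ^ 2) / (b - a)) ^ (β - 1 / 2) *
    ((b - (b - c) * p.1 ^ 2 - p.2 ^ 2) / (b - a)) ^ γ

/-- The weight `W_B^{(0,β,γ)}(s,t) = |t|^{2β} (1−s²−t²)^{γ}` on the disk. -/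
def WB0 (β γ : ℝ) (p : ℝ × ℝ) : ℝ :=
  |p.2| ^ (2 * β) * (1 - p.1 ^ 2 - p.2 ^ 2) ^ γ

/-- Evaluation of a polynomial in two variables at a point of `ℝ²`. -/
def ev2 (P : MvPolynomial (Fin 2) ℝ) (p : ℝ × ℝ) : ℝ :=
  MvPolynomial.eval ![p.1, p.2] P

/-- A polynomial of two variables is even in the second variable. -/
def EvenSnd (P : MvPolynomial (Fin 2) ℝ) : Prop :=
  ∀ u v : ℝ, ev2 P (u, -v) = ev2 P (u, v)

/-! ### Auxiliary polynomial lemmas -/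

open MvPolynomial in
lemma aux_prod_support_eq (d : Fin 2 →₀ ℕ) (f : Fin 2 → MvPolynomial (Fin 2) ℝ) :
    (∏ i ∈ d.support, f i ^ d i) = f 0 ^ d 0 * f 1 ^ d 1 := by
  rw [Finset.prod_subset (Finset.subset_univ d.support)
    (fun i _ hi => by simp [Finsupp.notMem_support_iff.mp hi])]
  exact Fin.prod_univ_two _

set_option maxRecDepth 4000 in
open MvPolynomial in
lemma aux_bind_neg_monomial (d : Fin 2 →₀ ℕ) (r : ℝ) :
    bind₁ ![X 0, -X (1:Fin 2)] (monomial d r) = monomial d ((-1)^(d 1) * r) := by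
  rw [bind₁_monomial, aux_prod_support_eq, monomial_eq]
  have h1 : (d.prod fun n e => (X n : MvPolynomial (Fin 2) ℝ) ^ e) = X 0 ^ d 0 * X 1 ^ d 1 := by
    rw [Finsupp.prod]; exact aux_prod_support_eq d X
  rw [h1]
  simp only [Matrix.cons_val_zero, Matrix.cons_val_one, Matrix.head_cons]
  rw [neg_pow, C_mul, C_pow, map_neg C, map_one C]
  ring

open MvPolynomial in
lemma aux_coeff_negsnd (P : MvPolynomial (Fin 2) ℝ) (m : Fin 2 →₀ ℕ) :
    coeff m (bind₁ ![X 0, -X (1:Fin 2)] P) = (-1)^(m 1) * coeff m P := by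
  conv_lhs => rw [P.as_sum]
  rw [map_sum]
  simp only [aux_bind_neg_monomial]
  rw [coeff_sum]
  simp only [coeff_monomial]
  by_cases hm : m ∈ P.support
  · rw [Finset.sum_eq_single m (fun b _ hb => if_neg hb) (fun h => absurd hm h)]
    simp
  · rw [Finset.sum_eq_zero (fun b hb => by
      have hbm : b ≠ m := fun h => hm (h ▸ hb)
      exact if_neg hbm)]
    rw [MvPolynomial.notMem_support_iff.mp hm]; ring

open MvPolynomial in
lemma aux_even_support (P : MvPolynomial (Fin 2) ℝ) (hP : EvenSnd P) :
    ∀ m ∈ P.support, Even (m 1) := by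
  intro m hm
  have hpoly : bind₁ ![X 0, -X (1:Fin 2)] P = P := by
    apply MvPolynomial.funext
    intro x
    have he : eval x (bind₁ ![X 0, -X (1:Fin 2)] P) = eval ![x 0, -(x 1)] P := by
      have h := eval₂Hom_bind₁ (RingHom.id ℝ) x ![X 0, -X (1:Fin 2)] P
      rw [show (eval₂Hom (RingHom.id ℝ) x : MvPolynomial (Fin 2) ℝ →+* ℝ) = eval x from rfl] at h
      rw [h]
      have hfn : (fun i => (eval x) (![X 0, -X (1:Fin 2)] i)) = ![x 0, -(x 1)] := by
        funext i; fin_cases i <;> simp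
      rw [show (eval₂Hom (RingHom.id ℝ) fun i => (eval x) (![X 0, -X (1:Fin 2)] i) :
          MvPolynomial (Fin 2) ℝ →+* ℝ) = eval fun i => (eval x) (![X 0, -X (1:Fin 2)] i) from rfl,
        hfn]
    rw [he]
    have h2 := hP (x 0) (x 1)
    simp only [ev2] at h2
    have hx : ![x 0, x 1] = x := by funext i; fin_cases i <;> rfl
    rw [show (![(x 0, -(x 1)).1, (x 0, -(x 1)).2] : Fin 2 → ℝ) = ![x 0, -(x 1)] from rfl,
      show (![(x 0, x 1).1, (x 0, x 1).2] : Fin 2 → ℝ) = ![x 0, x 1] from rfl, hx] at h2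
    exact h2
  have hco := congrArg (coeff m) hpoly
  rw [aux_coeff_negsnd] at hco
  by_contra hodd
  rw [Nat.not_even_iff_odd] at hodd
  rw [hodd.neg_one_pow, neg_one_mul] at hco
  have : coeff m P = 0 := by linarith
  exact absurd this (MvPolynomial.mem_support_iff.mp hm)

open MvPolynomial in
/-- Substitution of an even polynomial: replace `X₁²` by `R`. -/
def evenSub (R P : MvPolynomial (Fin 2) ℝ) : MvPolynomial (Fin 2) ℝ :=
  ∑ m ∈ P.support, C (coeff m P) * X 0 ^ (m 0) * R ^ (m 1 / 2)

open MvPolynomial in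
lemma aux_eval_evenSub (R P : MvPolynomial (Fin 2) ℝ) (x : Fin 2 → ℝ) :
    eval x (evenSub R P)
      = ∑ m ∈ P.support, coeff m P * (x 0) ^ (m 0) * (eval x R) ^ (m 1 / 2) := by
  rw [evenSub, map_sum]
  refine Finset.sum_congr rfl fun m _ => ?_
  simp

open MvPolynomial in
lemma aux_evenSub_eval (R P : MvPolynomial (Fin 2) ℝ) (hP : ∀ m ∈ P.support, Even (m 1))
    (s t v : ℝ) (hv : v ^ 2 = eval ![s, t] R) :
    eval ![s, v] P = eval ![s, t] (evenSub R P) := by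
  rw [aux_eval_evenSub, eval_eq']
  refine Finset.sum_congr rfl fun m hm => ?_
  rw [Fin.prod_univ_two]
  simp only [Matrix.cons_val_zero, Matrix.cons_val_one, Matrix.head_cons]
  obtain ⟨k, hk⟩ := hP m hm
  rw [← hv, hk]
  rw [show (k + k) / 2 = k by omega, ← pow_mul, two_mul]
  ring

open MvPolynomial in
lemma aux_evenSub_totalDegree (R P : MvPolynomial (Fin 2) ℝ) (hR : R.totalDegree ≤ 2)
    (hP : ∀ m ∈ P.support, Even (m 1)) :
    (evenSub R P).totalDegree ≤ P.totalDegree := by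
  refine (totalDegree_finset_sum _ _).trans (Finset.sup_le fun m hm => ?_)
  have h1 : ((C (coeff m P) : MvPolynomial (Fin 2) ℝ) * X 0 ^ m 0 * R ^ (m 1 / 2)).totalDegree
      ≤ ((C (coeff m P) : MvPolynomial (Fin 2) ℝ) * X 0 ^ m 0).totalDegree
        + (R ^ (m 1 / 2)).totalDegree := totalDegree_mul _ _
  have h2 : ((C (coeff m P) : MvPolynomial (Fin 2) ℝ) * X 0 ^ m 0).totalDegree
      ≤ (C (coeff m P) : MvPolynomial (Fin 2) ℝ).totalDegree
        + ((X 0 : MvPolynomial (Fin 2) ℝ) ^ m 0).totalDegree := totalDegree_mul _ _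
  have h3 : ((X 0 : MvPolynomial (Fin 2) ℝ) ^ m 0).totalDegree = m 0 :=
    totalDegree_X_pow _ _
  have h4 : (R ^ (m 1 / 2)).totalDegree ≤ (m 1 / 2) * R.totalDegree := totalDegree_pow _ _
  have h5 : (C (coeff m P) : MvPolynomial (Fin 2) ℝ).totalDegree = 0 := totalDegree_C _
  have h6 : m 0 + m 1 ≤ P.totalDegree := by
    have := le_totalDegree hm
    rwa [Finsupp.sum_fintype _ _ (fun _ => rfl), Fin.sum_univ_two] at this
  obtain ⟨k, hk⟩ := hP m hm
  have h7 : (m 1 / 2) * R.totalDegree ≤ m 1 := by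
    calc (m 1 / 2) * R.totalDegree ≤ (m 1 / 2) * 2 := Nat.mul_le_mul_left _ hR
    _ ≤ m 1 := by omega
  omega

open MvPolynomial in
lemma aux_evenSub_evenSnd (R P : MvPolynomial (Fin 2) ℝ) (hR : EvenSnd R) :
    EvenSnd (evenSub R P) := by
  intro u v
  have hRe : eval ![u, -v] R = eval ![u, v] R := hR u v
  simp only [ev2, aux_eval_evenSub]
  refine Finset.sum_congr rfl fun m _ => ?_
  rw [show (![(u,-v).1, (u,-v).2] : Fin 2 → ℝ) = ![u, -v] from rfl,
    show (![(u,v).1, (u,v).2] : Fin 2 → ℝ) = ![u, v] from rfl, hRe]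
  simp

/-! ### Analytic lemmas: change of variables -/

def Efun (a b c : ℝ) (p : ℝ × ℝ) : ℝ := (b - a) * p.2 ^ 2 + a * (1 - p.1 ^ 2) + c * p.1 ^ 2

def Eder (a b c : ℝ) (p : ℝ × ℝ) : ℝ × ℝ →L[ℝ] ℝ :=
  (2 * (c - a) * p.1) • ContinuousLinearMap.fst ℝ ℝ ℝ
    + (2 * (b - a) * p.2) • ContinuousLinearMap.snd ℝ ℝ ℝ

lemma hasFDerivAt_Efun (a b c : ℝ) (p : ℝ × ℝ) :
    HasFDerivAt (Efun a b c) (Eder a b c p) p := by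
  have h1 : HasFDerivAt (fun q : ℝ × ℝ => q.1) (ContinuousLinearMap.fst ℝ ℝ ℝ) p :=
    hasFDerivAt_fst
  have h2 : HasFDerivAt (fun q : ℝ × ℝ => q.2) (ContinuousLinearMap.snd ℝ ℝ ℝ) p :=
    hasFDerivAt_snd
  have := ((((h2.mul h2).const_mul (b - a)).add
    ((((h1.mul h1).const_mul (-a)).add ((h1.mul h1).const_mul c)))).add_const a)
  refine (this.congr_fderiv ?_).congr_of_eventuallyEq (Filter.Eventually.of_forall fun q => ?_)
  · ext q <;> simp [Eder] <;> ring
  · simp [Efun]; ring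

def Fder (a b c : ℝ) (p : ℝ × ℝ) : ℝ × ℝ →L[ℝ] ℝ × ℝ :=
  (ContinuousLinearMap.fst ℝ ℝ ℝ).prod
    ((1 / (2 * Real.sqrt (Efun a b c p))) • Eder a b c p)

lemma hasFDerivAt_psiInv (a b c : ℝ) (p : ℝ × ℝ) (hE : 0 < Efun a b c p) :
    HasFDerivAt (psiInvMap a b c) (Fder a b c p) p := by
  have h1 : HasFDerivAt (fun q : ℝ × ℝ => q.1) (ContinuousLinearMap.fst ℝ ℝ ℝ) p :=
    hasFDerivAt_fst
  have hs : HasDerivAt Real.sqrt (1 / (2 * Real.sqrt (Efun a b c p))) (Efun a b c p) :=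
    Real.hasDerivAt_sqrt (ne_of_gt hE)
  have h2 : HasFDerivAt (fun q => Real.sqrt (Efun a b c q))
      ((1 / (2 * Real.sqrt (Efun a b c p))) • Eder a b c p) p :=
    hs.comp_hasFDerivAt p (hasFDerivAt_Efun a b c p)
  exact h1.prodMk h2

lemma det_Fder (a b c : ℝ) (p : ℝ × ℝ) :
    (Fder a b c p).det
      = (1 / (2 * Real.sqrt (Efun a b c p))) * (2 * (b - a) * p.2) := by
  have h : (Fder a b c p).det
      = Matrix.det (LinearMap.toMatrix (Module.Basis.finTwoProd ℝ) (Module.Basis.finTwoProd ℝ)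
          (Fder a b c p : ℝ × ℝ →ₗ[ℝ] ℝ × ℝ)) := by
    rw [ContinuousLinearMap.det, ← LinearMap.det_toMatrix (Module.Basis.finTwoProd ℝ)]
  rw [h, Matrix.det_fin_two]
  simp only [LinearMap.toMatrix_apply, Module.Basis.finTwoProd_zero, Module.Basis.finTwoProd_one,
    Module.Basis.coe_finTwoProd_repr]
  simp only [Fder, Eder, ContinuousLinearMap.coe_coe, ContinuousLinearMap.prod_apply,
    ContinuousLinearMap.smul_apply, ContinuousLinearMap.add_apply,
    ContinuousLinearMap.coe_fst', ContinuousLinearMap.coe_snd']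
  norm_num

/-- The open version of the half disk. -/
def Splus : Set (ℝ × ℝ) := {p | p.1 ^ 2 + p.2 ^ 2 ≤ 1 ∧ 0 < p.2}

/-- The a.e.-version of `LamSet`. -/
def Lam0 (a b c : ℝ) : Set (ℝ × ℝ) :=
  {p | a + (c - a) * p.1 ^ 2 < p.2 ^ 2 ∧ p.2 ^ 2 ≤ b + (c - b) * p.1 ^ 2 ∧ 0 ≤ p.2}

lemma graph_null (g : ℝ → ℝ) (hg : Measurable g) : volume {p : ℝ×ℝ | p.2 = g p.1} = 0 := by
  rw [MeasureTheory.Measure.volume_eq_prod, Measure.prod_apply (measurableSet_graph hg)]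
  simp

lemma measurableSet_Splus : MeasurableSet Splus := by
  have h1 : Measurable fun p : ℝ × ℝ => p.1 ^ 2 + p.2 ^ 2 := by fun_prop
  have h2 : Measurable fun p : ℝ × ℝ => p.2 := by fun_prop
  exact (measurableSet_le h1 measurable_const).inter (measurableSet_lt measurable_const h2)

lemma measurableSet_Bplus : MeasurableSet Bplus := by
  have h1 : Measurable fun p : ℝ × ℝ => p.1 ^ 2 + p.2 ^ 2 := by fun_prop
  have h2 : Measurable fun p : ℝ × ℝ => p.2 := by fun_prop
  exact (measurableSet_le h1 measurable_const).inter (measurableSet_le measurable_const h2)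

section params
variable {a b c : ℝ} (ha : 0 ≤ a) (hab : a < b) (hc : 0 ≤ c)

lemma Efun_pos_on (hab : a < b) {p : ℝ × ℝ} (ha : 0 ≤ a) (hc : 0 ≤ c)
    (hp : p ∈ Splus) : 0 < Efun a b c p := by
  obtain ⟨h1, h2⟩ := hp
  have hs : p.1 ^ 2 ≤ 1 := by nlinarith [sq_nonneg p.2]
  have hpos : 0 < (b - a) * p.2 ^ 2 := mul_pos (sub_pos.2 hab) (pow_pos h2 2)
  have h3 : 0 ≤ a * (1 - p.1 ^ 2) := mul_nonneg ha (by linarith)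
  have h4 : 0 ≤ c * p.1 ^ 2 := mul_nonneg hc (sq_nonneg _)
  unfold Efun; linarith

lemma Efun_nonneg_on (hab : a < b) {p : ℝ × ℝ} (ha : 0 ≤ a) (hc : 0 ≤ c)
    (hp : p ∈ Bplus) : 0 ≤ Efun a b c p := by
  obtain ⟨h1, h2⟩ := hp
  have hs : p.1 ^ 2 ≤ 1 := by nlinarith [sq_nonneg p.2]
  have hpos : 0 ≤ (b - a) * p.2 ^ 2 := mul_nonneg (by linarith) (sq_nonneg _)
  have h3 : 0 ≤ a * (1 - p.1 ^ 2) := mul_nonneg ha (by linarith)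
  have h4 : 0 ≤ c * p.1 ^ 2 := mul_nonneg hc (sq_nonneg _)
  unfold Efun; linarith

lemma psiInv_snd_sq (hab : a < b) (ha : 0 ≤ a) (hc : 0 ≤ c) {p : ℝ × ℝ} (hp : p ∈ Bplus) :
    (psiInvMap a b c p).2 ^ 2 = Efun a b c p := by
  have := Efun_nonneg_on hab ha hc hp
  simp only [psiInvMap]
  rw [Real.sq_sqrt]
  · rfl
  · exact this

lemma image_Splus (hab : a < b) (ha : 0 ≤ a) (hc : 0 ≤ c) :
    psiInvMap a b c '' Splus = Lam0 a b c := by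
  ext q
  constructor
  · rintro ⟨p, hp, rfl⟩
    have hE : 0 < Efun a b c p := Efun_pos_on hab ha hc hp
    obtain ⟨h1, h2⟩ := hp
    have hsq : (psiInvMap a b c p).2 ^ 2 = Efun a b c p :=
      psiInv_snd_sq hab ha hc ⟨h1, h2.le⟩
    refine ⟨?_, ?_, Real.sqrt_nonneg _⟩
    · show a + (c - a) * p.1 ^ 2 < (psiInvMap a b c p).2 ^ 2
      rw [hsq]
      have hpos : 0 < (b - a) * p.2 ^ 2 := mul_pos (sub_pos.2 hab) (pow_pos h2 2)
      unfold Efun; nlinarith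
    · show (psiInvMap a b c p).2 ^ 2 ≤ b + (c - b) * (psiInvMap a b c p).1 ^ 2
      rw [hsq]
      show Efun a b c p ≤ b + (c - b) * p.1 ^ 2
      have : p.2 ^ 2 ≤ 1 - p.1 ^ 2 := by linarith
      have hba : 0 < b - a := sub_pos.2 hab
      unfold Efun; nlinarith
  · rintro ⟨h1, h2, h3⟩
    have hba : 0 < b - a := sub_pos.2 hab
    set w : ℝ := (q.2 ^ 2 - a - (c - a) * q.1 ^ 2) / (b - a) with hw
    have hwpos : 0 < w := by
      apply div_pos _ hba
      linarith
    refine ⟨(q.1, Real.sqrt w), ⟨?_, Real.sqrt_pos.2 hwpos⟩, ?_⟩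
    · have hsq : Real.sqrt w ^ 2 = w := Real.sq_sqrt hwpos.le
      have hwle : w ≤ 1 - q.1 ^ 2 := by
        rw [hw, div_le_iff₀ hba]
        nlinarith
      rw [hsq]; linarith
    · have hsq : Real.sqrt w ^ 2 = w := Real.sq_sqrt hwpos.le
      show (q.1, Real.sqrt ((b - a) * Real.sqrt w ^ 2 + a * (1 - q.1 ^ 2) + c * q.1 ^ 2)) = q
      rw [hsq, hw]
      have : (b - a) * ((q.2 ^ 2 - a - (c - a) * q.1 ^ 2) / (b - a)) + a * (1 - q.1 ^ 2)
          + c * q.1 ^ 2 = q.2 ^ 2 := by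
        field_simp
        ring
      rw [this, Real.sqrt_sq h3]

lemma injOn_psiInv (hab : a < b) (ha : 0 ≤ a) (hc : 0 ≤ c) :
    Set.InjOn (psiInvMap a b c) Splus := by
  intro p hp q hq heq
  have h1 : p.1 = q.1 := by
    have := congrArg Prod.fst heq
    simpa [psiInvMap] using this
  have h2 : (psiInvMap a b c p).2 = (psiInvMap a b c q).2 := congrArg Prod.snd heq
  have hEp : (psiInvMap a b c p).2 ^ 2 = Efun a b c p :=
    psiInv_snd_sq hab ha hc ⟨hp.1, hp.2.le⟩
  have hEq : (psiInvMap a b c q).2 ^ 2 = Efun a b c q :=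
    psiInv_snd_sq hab ha hc ⟨hq.1, hq.2.le⟩
  have hE : Efun a b c p = Efun a b c q := by rw [← hEp, ← hEq, h2]
  have hba : (0:ℝ) < b - a := sub_pos.2 hab
  have hsq : p.2 ^ 2 = q.2 ^ 2 := by
    have : (b - a) * p.2 ^ 2 = (b - a) * q.2 ^ 2 := by
      simp only [Efun] at hE
      rw [h1] at hE
      linarith
    exact mul_left_cancel₀ (ne_of_gt hba) this
  have : p.2 = q.2 := by
    have := congrArg Real.sqrt hsq
    rwa [Real.sqrt_sq hp.2.le, Real.sqrt_sq hq.2.le] at this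
  exact Prod.ext h1 this

lemma weight_identity (hab : a < b) (ha : 0 ≤ a) (hc : 0 ≤ c) (β γ : ℝ)
    {p : ℝ × ℝ} (hp : p ∈ Splus) :
    |(Fder a b c p).det| * W0abc a b c β γ (psiInvMap a b c p)
      = (b - a) * WB0 β γ p := by
  obtain ⟨h1, h2⟩ := hp
  have hE : 0 < Efun a b c p := Efun_pos_on hab ha hc ⟨h1, h2⟩
  have hV : 0 < Real.sqrt (Efun a b c p) := Real.sqrt_pos.2 hE
  have hba : (0:ℝ) < b - a := sub_pos.2 hab
  have hsq : (psiInvMap a b c p).2 ^ 2 = Efun a b c p := psiInv_snd_sq hab ha hc ⟨h1, h2.le⟩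
  -- the determinant
  have hdet : |(Fder a b c p).det| = (b - a) * p.2 / Real.sqrt (Efun a b c p) := by
    rw [det_Fder]
    rw [abs_of_pos]
    · field_simp
    · have : (0:ℝ) < 2 * Real.sqrt (Efun a b c p) := by linarith
      positivity
  -- the weight components
  have hA : (-a + (a - c) * (psiInvMap a b c p).1 ^ 2 + (psiInvMap a b c p).2 ^ 2) / (b - a)
      = p.2 ^ 2 := by
    rw [hsq]
    show (-a + (a - c) * p.1 ^ 2 + Efun a b c p) / (b - a) = p.2 ^ 2
    unfold Efun
    field_simp
    ring
  have hB : (b - (b - c) * (psiInvMap a b c p).1 ^ 2 - (psiInvMap a b c p).2 ^ 2) / (b - a)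
      = 1 - p.1 ^ 2 - p.2 ^ 2 := by
    rw [hsq]
    show (b - (b - c) * p.1 ^ 2 - Efun a b c p) / (b - a) = 1 - p.1 ^ 2 - p.2 ^ 2
    unfold Efun
    field_simp
    ring
  have habs : |(psiInvMap a b c p).2| = Real.sqrt (Efun a b c p) := by
    simp only [psiInvMap]
    exact abs_of_nonneg (Real.sqrt_nonneg _)
  rw [W0abc, hA, hB, habs, hdet]
  -- now pure rpow computation
  have hrp : (p.2 ^ 2 : ℝ) ^ (β - 1/2) = p.2 ^ (2*β - 1) := by
    have hexp : ((2:ℕ):ℝ) * (β - 1/2) = 2*β - 1 := by push_cast; ring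
    rw [← Real.rpow_natCast p.2 2, ← Real.rpow_mul h2.le, hexp]
  have ht2b : p.2 * p.2 ^ (2*β - 1) = p.2 ^ (2*β) := by
    nth_rewrite 1 [← Real.rpow_one p.2]
    rw [← Real.rpow_add h2]
    norm_num
  rw [WB0, abs_of_pos h2, hrp]
  have hVne : Real.sqrt (Efun a b c p) ≠ 0 := ne_of_gt hV
  rw [← ht2b]
  field_simp

lemma lam_ae_eq (hab : a < b) (ha : 0 ≤ a) (hc : 0 ≤ c) :
    LamSet a b c =ᵐ[volume] Lam0 a b c := by
  have hsub : Lam0 a b c ⊆ LamSet a b c := by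
    rintro p ⟨h1, h2, h3⟩
    have hba : (0:ℝ) < b - a := sub_pos.2 hab
    have hu : p.1 ^ 2 < 1 := by nlinarith
    exact ⟨h1.le, h2, by rw [abs_le]; constructor <;> nlinarith, h3⟩
  have hdiff : LamSet a b c \ Lam0 a b c
      ⊆ {p : ℝ × ℝ | p.2 = Real.sqrt (a + (c - a) * p.1 ^ 2)} := by
    rintro p ⟨⟨h1, h2, h3, h4⟩, hn⟩
    have hle : ¬ (a + (c - a) * p.1 ^ 2 < p.2 ^ 2) := fun hlt => hn ⟨hlt, h2, h4⟩
    have heq : p.2 ^ 2 = a + (c - a) * p.1 ^ 2 := le_antisymm (not_lt.mp hle) h1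
    show p.2 = Real.sqrt (a + (c - a) * p.1 ^ 2)
    rw [← heq, Real.sqrt_sq h4]
  refine (MeasureTheory.ae_eq_set.2 ⟨?_, ?_⟩)
  · exact measure_mono_null hdiff (graph_null (fun u => Real.sqrt (a + (c - a) * u ^ 2))
        ((Real.continuous_sqrt.comp (continuous_const.add
          (continuous_const.mul (continuous_pow 2)))).measurable))
  · rw [Set.diff_eq_empty.2 hsub]; simp

lemma bplus_ae_eq : Bplus =ᵐ[volume] (Splus : Set (ℝ × ℝ)) := by
  have hsub : Splus ⊆ Bplus := fun p hp => ⟨hp.1, hp.2.le⟩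
  have hdiff : Bplus \ Splus ⊆ {p : ℝ × ℝ | p.2 = (fun _ : ℝ => (0:ℝ)) p.1} := by
    rintro p ⟨⟨h1, h2⟩, hn⟩
    have : ¬ (0 < p.2) := fun h => hn ⟨h1, h⟩
    simpa using le_antisymm (not_lt.mp this) h2
  refine MeasureTheory.ae_eq_set.2 ⟨?_, ?_⟩
  · exact measure_mono_null hdiff (graph_null (fun _ => 0) measurable_const)
  · rw [Set.diff_eq_empty.2 hsub]; simp

lemma cov (hab : a < b) (ha : 0 ≤ a) (hc : 0 ≤ c) (β γ : ℝ) (g : ℝ × ℝ → ℝ) :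
    ∫ p in LamSet a b c, g p * W0abc a b c β γ p
      = (b - a) * ∫ p in Bplus, g (psiInvMap a b c p) * WB0 β γ p := by
  have h1 : ∫ p in LamSet a b c, g p * W0abc a b c β γ p
      = ∫ p in Lam0 a b c, g p * W0abc a b c β γ p :=
    setIntegral_congr_set (lam_ae_eq hab ha hc)
  have h2 : Lam0 a b c = psiInvMap a b c '' Splus := (image_Splus hab ha hc).symm
  have h3 := integral_image_eq_integral_abs_det_fderiv_smul volume measurableSet_Splus
      (fun p hp => (hasFDerivAt_psiInv a b c p (Efun_pos_on hab ha hc hp)).hasFDerivWithinAt)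
      (injOn_psiInv hab ha hc) (fun p => g p * W0abc a b c β γ p)
  have h4 : ∫ p in Splus, |(Fder a b c p).det|
        • (g (psiInvMap a b c p) * W0abc a b c β γ (psiInvMap a b c p))
      = ∫ p in Splus, (b - a) * (g (psiInvMap a b c p) * WB0 β γ p) := by
    refine setIntegral_congr_fun measurableSet_Splus fun p hp => ?_
    have hw := weight_identity hab ha hc β γ hp
    rw [smul_eq_mul]
    calc |(Fder a b c p).det| * (g (psiInvMap a b c p) * W0abc a b c β γ (psiInvMap a b c p))
        = g (psiInvMap a b c p)
            * (|(Fder a b c p).det| * W0abc a b c β γ (psiInvMap a b c p)) := by ring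
      _ = g (psiInvMap a b c p) * ((b - a) * WB0 β γ p) := by rw [hw]
      _ = (b - a) * (g (psiInvMap a b c p) * WB0 β γ p) := by ring
  have h5 : ∫ p in Splus, (b - a) * (g (psiInvMap a b c p) * WB0 β γ p)
      = (b - a) * ∫ p in Splus, g (psiInvMap a b c p) * WB0 β γ p :=
    MeasureTheory.integral_const_mul _ _
  have h6 : ∫ p in Splus, g (psiInvMap a b c p) * WB0 β γ p
      = ∫ p in Bplus, g (psiInvMap a b c p) * WB0 β γ p :=
    setIntegral_congr_set bplus_ae_eq.symm
  rw [h1, h2, h3, h4, h5, h6]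

/-! ### Polynomial transfer -/

open MvPolynomial in
def Rgen (r1 r2 r3 : ℝ) : MvPolynomial (Fin 2) ℝ := C r1 * X 1 ^ 2 + C r2 * X 0 ^ 2 + C r3

open MvPolynomial in
lemma eval_Rgen (r1 r2 r3 : ℝ) (x : Fin 2 → ℝ) :
    eval x (Rgen r1 r2 r3) = r1 * (x 1) ^ 2 + r2 * (x 0) ^ 2 + r3 := by
  simp [Rgen]

open MvPolynomial in
lemma Rgen_totalDegree (r1 r2 r3 : ℝ) : (Rgen r1 r2 r3).totalDegree ≤ 2 := by
  have hCX : ∀ (r : ℝ) (i : Fin 2),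
      ((C r : MvPolynomial (Fin 2) ℝ) * X i ^ 2).totalDegree ≤ 2 := fun r i =>
    (totalDegree_mul _ _).trans (by rw [totalDegree_C, totalDegree_X_pow])
  refine (totalDegree_add _ _).trans (max_le ((totalDegree_add _ _).trans
    (max_le (hCX _ _) (hCX _ _))) ?_)
  rw [totalDegree_C]; omega

open MvPolynomial in
lemma Rgen_evenSnd (r1 r2 r3 : ℝ) : EvenSnd (Rgen r1 r2 r3) := by
  intro u v
  show eval ![(u, -v).1, (u, -v).2] _ = eval ![(u, v).1, (u, v).2] _
  rw [eval_Rgen, eval_Rgen]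
  norm_num

open MvPolynomial in
lemma transfer1 (hab : a < b) (ha : 0 ≤ a) (hc : 0 ≤ c) (P : MvPolynomial (Fin 2) ℝ)
    (hP : EvenSnd P) {p : ℝ × ℝ} (hp : p ∈ Bplus) :
    ev2 P (psiInvMap a b c p) = ev2 (evenSub (Rgen (b - a) (c - a) a) P) p := by
  have hv : (psiInvMap a b c p).2 ^ 2 = eval ![p.1, p.2] (Rgen (b - a) (c - a) a) := by
    rw [psiInv_snd_sq hab ha hc hp, eval_Rgen]
    show Efun a b c p = _
    unfold Efun
    simp only [Matrix.cons_val_zero, Matrix.cons_val_one, Matrix.head_cons]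
    ring
  have := aux_evenSub_eval (Rgen (b - a) (c - a) a) P (aux_even_support P hP)
    p.1 p.2 (psiInvMap a b c p).2 hv
  exact this

open MvPolynomial in
lemma transfer2 (hab : a < b) (ha : 0 ≤ a) (hc : 0 ≤ c) (P' : MvPolynomial (Fin 2) ℝ)
    (hP' : EvenSnd P') {p : ℝ × ℝ} (hp : p ∈ Bplus) :
    ev2 P' p = ev2 (evenSub (Rgen ((b - a)⁻¹) ((a - c) / (b - a)) (-(a / (b - a)))) P')
      (psiInvMap a b c p) := by
  have hba : (0:ℝ) < b - a := sub_pos.2 hab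
  have hv : p.2 ^ 2 = eval ![p.1, (psiInvMap a b c p).2]
      (Rgen ((b - a)⁻¹) ((a - c) / (b - a)) (-(a / (b - a)))) := by
    rw [eval_Rgen]
    simp only [Matrix.cons_val_zero, Matrix.cons_val_one, Matrix.head_cons]
    have h2 : (psiInvMap a b c p).2 ^ 2 = Efun a b c p := psiInv_snd_sq hab ha hc hp
    rw [h2]
    unfold Efun
    field_simp
    ring
  have := aux_evenSub_eval (Rgen ((b - a)⁻¹) ((a - c) / (b - a)) (-(a / (b - a)))) P'
    (aux_even_support P' hP') p.1 (psiInvMap a b c p).2 p.2 hv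
  exact this

lemma elem_transfer (hab : a < b) (ha : 0 ≤ a) (hc : 0 ≤ c) (β γ q : ℝ)
    (f : ℝ × ℝ → ℝ) (P PB : MvPolynomial (Fin 2) ℝ)
    (hmatch : ∀ p ∈ Bplus, ev2 P (psiInvMap a b c p) = ev2 PB p) :
    (∫ p in LamSet a b c, |f p - ev2 P p| ^ q * W0abc a b c β γ p) ^ (1/q)
      = (b - a) ^ (1/q)
        * (∫ p in Bplus, |f (psiInvMap a b c p) - ev2 PB p| ^ q * WB0 β γ p) ^ (1/q) := by
  have h1 := cov hab ha hc β γ (fun p => |f p - ev2 P p| ^ q)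
  have h2 : ∫ p in Bplus, |f (psiInvMap a b c p) - ev2 P (psiInvMap a b c p)| ^ q * WB0 β γ p
      = ∫ p in Bplus, |f (psiInvMap a b c p) - ev2 PB p| ^ q * WB0 β γ p := by
    refine setIntegral_congr_fun measurableSet_Bplus fun p hp => ?_
    rw [hmatch p hp]
  rw [h1, h2]
  have hI : 0 ≤ ∫ p in Bplus, |f (psiInvMap a b c p) - ev2 PB p| ^ q * WB0 β γ p := by
    refine setIntegral_nonneg measurableSet_Bplus fun p hp => ?_
    apply mul_nonneg (Real.rpow_nonneg (abs_nonneg _) _)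
    apply mul_nonneg (Real.rpow_nonneg (abs_nonneg _) _)
    apply Real.rpow_nonneg
    have := hp.1
    nlinarith [sq_nonneg p.2]
  exact Real.mul_rpow (by linarith) hI

end params

open scoped Pointwise

/-- the error of best `L^p` approximation by polynomials of degree at most
`n` that are even in the second variable is the same on `Λ_{a,b,c}` and on `B²₊`, up to
the factor `(b−a)^{1/p}`. -/
theorem best_approximation_transfers
    (a b c β γ : ℝ) (ha : 0 ≤ a) (hab : a < b) (hc : 0 ≤ c)
    (hβ : -(1 : ℝ) / 2 < β) (hγ : -1 < γ) (n : ℕ) (q : ℝ) (hq : 1 ≤ q)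
    (f : ℝ × ℝ → ℝ) (hf : Measurable f)
    (hfint : IntegrableOn (fun p => |f p| ^ q * W0abc a b c β γ p) (LamSet a b c)) :
    sInf {r : ℝ | ∃ P : MvPolynomial (Fin 2) ℝ, P.totalDegree ≤ n ∧ EvenSnd P ∧
        r = (∫ p in LamSet a b c, |f p - ev2 P p| ^ q * W0abc a b c β γ p) ^ (1 / q)}
      = (b - a) ^ (1 / q) *
        sInf {r : ℝ | ∃ P : MvPolynomial (Fin 2) ℝ, P.totalDegree ≤ n ∧ EvenSnd P ∧
          r = (∫ p in Bplus,
                |f (psiInvMap a b c p) - ev2 P p| ^ q * WB0 β γ p) ^ (1 / q)} := by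
  have hba : (0:ℝ) ≤ (b - a) ^ (1/q) := Real.rpow_nonneg (by linarith) _
  have hset : {r : ℝ | ∃ P : MvPolynomial (Fin 2) ℝ, P.totalDegree ≤ n ∧ EvenSnd P ∧
        r = (∫ p in LamSet a b c, |f p - ev2 P p| ^ q * W0abc a b c β γ p) ^ (1 / q)}
      = (b - a) ^ (1 / q) •
        {r : ℝ | ∃ P : MvPolynomial (Fin 2) ℝ, P.totalDegree ≤ n ∧ EvenSnd P ∧
          r = (∫ p in Bplus,
                |f (psiInvMap a b c p) - ev2 P p| ^ q * WB0 β γ p) ^ (1 / q)} := by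
    ext r
    constructor
    · rintro ⟨P, hdeg, heven, rfl⟩
      refine Set.mem_smul_set.2
        ⟨(∫ p in Bplus, |f (psiInvMap a b c p)
            - ev2 (evenSub (Rgen (b - a) (c - a) a) P) p| ^ q * WB0 β γ p) ^ (1 / q),
          ⟨evenSub (Rgen (b - a) (c - a) a) P,
            (aux_evenSub_totalDegree _ _ (Rgen_totalDegree _ _ _)
              (aux_even_support P heven)).trans hdeg,
            aux_evenSub_evenSnd _ _ (Rgen_evenSnd _ _ _), rfl⟩, ?_⟩
      rw [smul_eq_mul]
      exact (elem_transfer hab ha hc β γ q f P _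
        (fun p hp => transfer1 hab ha hc P heven hp)).symm
    · rintro ⟨y, ⟨P', hdeg, heven, rfl⟩, rfl⟩
      refine ⟨evenSub (Rgen ((b - a)⁻¹) ((a - c) / (b - a)) (-(a / (b - a)))) P',
        (aux_evenSub_totalDegree _ _ (Rgen_totalDegree _ _ _)
          (aux_even_support P' heven)).trans hdeg,
        aux_evenSub_evenSnd _ _ (Rgen_evenSnd _ _ _), ?_⟩
      show (b - a) ^ (1 / q) * _ = _
      exact (elem_transfer hab ha hc β γ q f _ P'
        (fun p hp => (transfer2 hab ha hc P' heven hp).symm)).symm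
  rw [hset, Real.sInf_smul_of_nonneg hba, smul_eq_mul]
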